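/- Let $f(x)$ be a polynomial of degree at most $2g+2$ and let $U, V$ be polynomials with $U$ monic, $\deg V < \deg U$, and $U \mid (f - V^2)$. Set $U' = (f - V^2)/U$ and $V' = -V \bmod U'$. Then $U' \mid (f - V'^2)$, i.e. one step of Cantor's reduction algorithm preserves the invariant that the pair $(U', V')$ represents a divisor on the hyperelliptic curve $y^2 = f(x)$. -/
import Mathlib


open Polynomial

/-- One step of Cantor's reduction algorithm (with `h = 0`) preserves the Mumford
invariant: if `U ∣ f - V²`, `U' = (f - V²)/U` and `V' = -V mod U'`, then `U' ∣ f - V'²`. -/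
theorem stmt7 {k : Type*} [Field k] [CharZero k] (g : ℕ) (f U V : Polynomial k)
    (hf : f.natDegree ≤ 2 * g + 2) (hU : U.Monic) (hV : V.natDegree < U.natDegree)
    (hdvd : U ∣ f - V ^ 2) :
    (f - V ^ 2) / U ∣ f - (-V % ((f - V ^ 2) / U)) ^ 2 := by
  set W := (f - V ^ 2) / U with hW
  have h1 : W ∣ f - V ^ 2 := ⟨U, (EuclideanDomain.mul_div_cancel' hU.ne_zero hdvd).symm ▸ mul_comm U W⟩
  set V' := -V % W with hV'
  have h2 : W ∣ V' + V := by
    have := EuclideanDomain.mod_add_div (-V) W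
    exact ⟨-(-V / W), by linear_combination this⟩
  have h3 : W ∣ V' ^ 2 - V ^ 2 := by
    have : V' ^ 2 - V ^ 2 = (V' + V) * (V' - V) := by ring
    exact this ▸ Dvd.dvd.mul_right h2 _
  have : f - V' ^ 2 = (f - V ^ 2) - (V' ^ 2 - V ^ 2) := by ring
  exact this ▸ dvd_sub h1 h3
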